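/- Let C be an [n,k] linear code over a finite field F_q with generalized Hamming weights d_1 < d_2 < ... < d_k. For any 1 ≤ i ≤ k and any subset U of {1,...,n} with |U| ≥ n - d_i + 1, one has ρ(U) ≥ k - (i - 1). -/
import Mathlib

open Finset

/-- for an [n,k] linear code `C` with generalized Hamming weights `d_i`, any
`1 ≤ i ≤ k`, and any `U ⊆ [n]` with `|U| ≥ n - d_i + 1`, one has `ρ(U) ≥ k - (i-1)`,
where `ρ(U)` is the dimension of the projection of `C` onto the coordinates in `U`
(equivalently, the rank of the corresponding columns of a generator matrix). -/
theorem stmt_10 (n k : ℕ) (F : Type) [Field F] [Fintype F] [DecidableEq F]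
    (C : Submodule F (Fin n → F)) (hdim : Module.finrank F C = k)
    (d : ℕ → ℕ)
    (hd : ∀ i, 1 ≤ i → i ≤ k →
      IsLeast {w | ∃ D : Submodule F (Fin n → F), D ≤ C ∧ Module.finrank F D = i ∧
        Set.ncard {j : Fin n | ∃ c ∈ D, c j ≠ 0} = w} (d i)) :
    ∀ i, 1 ≤ i → i ≤ k → ∀ U : Finset (Fin n), n - d i + 1 ≤ U.card →
      k - (i - 1) ≤
        Module.finrank F (C.map (LinearMap.funLeft F F (Subtype.val : ↥U → Fin n))) := by
  intro i hi1 hik U hU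
  by_contra hlt
  push_neg at hlt
  have hrange : LinearMap.range
      ((LinearMap.funLeft F F (Subtype.val : ↥U → Fin n)).comp C.subtype)
      = C.map (LinearMap.funLeft F F (Subtype.val : ↥U → Fin n)) := by
    rw [LinearMap.range_comp, Submodule.range_subtype]
  have hrn := LinearMap.finrank_range_add_finrank_ker
    ((LinearMap.funLeft F F (Subtype.val : ↥U → Fin n)).comp C.subtype)
  rw [hrange, hdim] at hrn
  -- the kernel (viewed inside the ambient space) has dimension at least i
  have hle : i ≤ Module.finrank F
      ((LinearMap.ker ((LinearMap.funLeft F F (Subtype.val : ↥U → Fin n)).comp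
        C.subtype)).map C.subtype) := by
    rw [Submodule.finrank_map_subtype_eq]
    omega
  let b := Module.finBasis F
    ((LinearMap.ker ((LinearMap.funLeft F F (Subtype.val : ↥U → Fin n)).comp
      C.subtype)).map C.subtype)
  let v : Fin i → (Fin n → F) := fun j => (b (Fin.castLE hle j) : Fin n → F)
  have hv : LinearIndependent F v := by
    have h1 : LinearIndependent F (b ∘ Fin.castLE hle) :=
      b.linearIndependent.comp _ (Fin.castLE_injective hle)
    exact h1.map' (Submodule.subtype _) (Submodule.ker_subtype _)
  have hvK : ∀ j, v j ∈ (LinearMap.ker ((LinearMap.funLeft F F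
      (Subtype.val : ↥U → Fin n)).comp C.subtype)).map C.subtype :=
    fun j => (b (Fin.castLE hle j)).2
  set D := Submodule.span F (Set.range v) with hD
  have hDK : D ≤ (LinearMap.ker ((LinearMap.funLeft F F
      (Subtype.val : ↥U → Fin n)).comp C.subtype)).map C.subtype := by
    rw [hD, Submodule.span_le]
    rintro _ ⟨j, rfl⟩
    exact hvK j
  have hDC : D ≤ C := by
    refine hDK.trans ?_
    rw [Submodule.map_le_iff_le_comap]
    intro x _
    exact x.2
  have hfin : Module.finrank F D = i := by
    rw [hD, finrank_span_eq_card hv, Fintype.card_fin]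
  -- the support of D is contained in the complement of U
  have hsub : {j : Fin n | ∃ c ∈ D, c j ≠ 0} ⊆ (↑(Uᶜ) : Set (Fin n)) := by
    rintro j ⟨c, hcD, hcj⟩
    simp only [Finset.coe_compl, Set.mem_compl_iff, Finset.mem_coe]
    intro hjU
    obtain ⟨x, hx, rfl⟩ := hDK hcD
    have h0 : LinearMap.funLeft F F (Subtype.val : ↥U → Fin n) (x : Fin n → F) = 0 := hx
    have : (x : Fin n → F) j = 0 := by
      have := congrFun h0 ⟨j, hjU⟩
      simpa [LinearMap.funLeft] using this
    exact hcj this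
  have hcard : Set.ncard {j : Fin n | ∃ c ∈ D, c j ≠ 0} ≤ n - U.card := by
    calc Set.ncard {j : Fin n | ∃ c ∈ D, c j ≠ 0}
        ≤ Set.ncard (↑(Uᶜ) : Set (Fin n)) := Set.ncard_le_ncard hsub (Set.toFinite _)
      _ = (Uᶜ).card := Set.ncard_coe_finset _
      _ = n - U.card := by rw [Finset.card_compl, Fintype.card_fin]
  have hdle : d i ≤ Set.ncard {j : Fin n | ∃ c ∈ D, c j ≠ 0} :=
    (hd i hi1 hik).2 ⟨D, hDC, hfin, rfl⟩
  have hUn : U.card ≤ n := by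
    simpa using Finset.card_le_card (Finset.subset_univ U)
  have hfinal : d i ≤ n - U.card := hdle.trans hcard
  clear hd hsub hdle hcard
  omega
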